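/- Every uniquely nil clean ring is a CN ring: if R is a ring such that for every element a of R there is a unique idempotent e of R with a - e nilpotent, then every element of R is a sum of a central element and a nilpotent element. In particular, in such a ring every idempotent is central. -/
import Mathlib


/-- An element of a ring has a *CN-decomposition* if it is a sum of a central
element and a nilpotent element. -/
def HasCNDecomp {R : Type*} [Ring R] (a : R) : Prop :=
  ∃ c n : R, c ∈ Set.center R ∧ IsNilpotent n ∧ a = c + n

/-- A ring is a *CN ring* if every element has a CN-decomposition. -/
def IsCNRing (R : Type*) [Ring R] : Prop := ∀ a : R, HasCNDecomp a

/-- A ring is *uniquely nil clean* if every element is, in a unique way, the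
sum of an idempotent and a nilpotent element. -/
def IsUniquelyNilClean (R : Type*) [Ring R] : Prop :=
  ∀ a : R, ∃! e : R, IsIdempotentElem e ∧ IsNilpotent (a - e)

lemma idem_central_aux {R : Type*} [Ring R] (h : IsUniquelyNilClean R)
    (e : R) (he : IsIdempotentElem e) (x : R) : e * x * (1 - e) = 0 := by
  have h0 : (1 - e) * e = 0 := by
    simp [sub_mul, he.eq]
  set f : R := e + e * x * (1 - e) with hf
  have hsq : (e * x * (1 - e)) * (e * x * (1 - e)) = 0 := by
    have : e * x * ((1 - e) * (e * x * (1 - e))) = 0 := by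
      rw [show (1 - e) * (e * x * (1 - e)) = ((1 - e) * e) * x * (1 - e) by noncomm_ring, h0]
      noncomm_ring
    calc (e * x * (1 - e)) * (e * x * (1 - e))
        = e * x * ((1 - e) * (e * x * (1 - e))) := by noncomm_ring
      _ = 0 := this
  have hfidem : IsIdempotentElem f := by
    unfold IsIdempotentElem
    have h1 : f * f = e * e + e * (e * x * (1 - e)) + ((e * x * (1 - e)) * e)
        + (e * x * (1 - e)) * (e * x * (1 - e)) := by rw [hf]; noncomm_ring
    have h2 : (e * x * (1 - e)) * e = e * x * ((1 - e) * e) := by noncomm_ring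
    have h3 : e * (e * x * (1 - e)) = (e * e) * x * (1 - e) := by noncomm_ring
    rw [h1, h2, h3, h0, hsq, he.eq, hf]
    noncomm_ring
  have hnil : IsNilpotent (e - f) := by
    refine ⟨2, ?_⟩
    have : e - f = -(e * x * (1 - e)) := by rw [hf]; noncomm_ring
    rw [this, pow_two, neg_mul_neg, hsq]
  obtain ⟨g, _, hu⟩ := h e
  have h1 : e = g := hu e ⟨he, by simp⟩
  have h2 : f = g := hu f ⟨hfidem, hnil⟩
  have : f = e := h2.trans h1.symm
  have := sub_eq_zero.mpr this
  rw [hf] at this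
  simpa using this

/-- Every uniquely nil clean ring is a CN ring; in particular every idempotent
in such a ring is central. -/
theorem isCNRing_of_uniquelyNilClean {R : Type*} [Ring R] (h : IsUniquelyNilClean R) :
    IsCNRing R ∧ ∀ e : R, IsIdempotentElem e → e ∈ Set.center R := by
  have hcent : ∀ e : R, IsIdempotentElem e → e ∈ Set.center R := by
    intro e he
    rw [Semigroup.mem_center_iff]
    intro x
    have h1 : e * x * (1 - e) = 0 := idem_central_aux h e he x
    have h2 : (1 - e) * x * e = 0 := by
      have he' : IsIdempotentElem (1 - e) := he.one_sub
      have := idem_central_aux h (1 - e) he' x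
      simpa using this
    have e1 : e * x = e * x * e := by
      have : e * x * (1 - e) = e * x - e * x * e := by noncomm_ring
      rw [this] at h1
      exact sub_eq_zero.mp h1
    have e2 : x * e = e * (x * e) := by
      have : (1 - e) * x * e = x * e - e * (x * e) := by noncomm_ring
      rw [this] at h2
      exact sub_eq_zero.mp h2
    rw [e1, e2]; noncomm_ring
  refine ⟨?_, hcent⟩
  intro a
  obtain ⟨e, ⟨he, hn⟩, _⟩ := h a
  exact ⟨e, a - e, hcent e he, hn, by abel⟩
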